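/- Fisher's inequality: in any 2-(v, k, λ) design with k < v, the number of blocks is at least the number of points. -/

import Mathlib

open Finset Matrix

theorem fisher_inequality (v k lam b : ℕ) (hk2 : 2 ≤ k) (hkv : k < v)
    (hlam : 1 ≤ lam) (B : Fin b → Finset (Fin v))
    (hcard : ∀ i, (B i).card = k)
    (hcover : ∀ p q : Fin v, p ≠ q →
      Nat.card {i : Fin b // p ∈ B i ∧ q ∈ B i} = lam) :
    v ≤ b := by
  classical
  -- pair count as a Finset card
  have hpair : ∀ p q : Fin v, p ≠ q →
      (univ.filter (fun i => p ∈ B i ∧ q ∈ B i)).card = lam := by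
    intro p q h
    rw [← hcover p q h, Nat.card_eq_fintype_card, Fintype.card_subtype]
  set r : Fin v → ℕ := fun p => (univ.filter (fun i => p ∈ B i)).card with hrdef
  -- replication count identity
  have hrk : ∀ p, r p * (k - 1) = lam * (v - 1) := by
    intro p
    have key : ∑ q ∈ univ.erase p, (univ.filter (fun i => p ∈ B i ∧ q ∈ B i)).card
        = r p * (k - 1) := by
      simp only [Finset.card_filter]
      rw [Finset.sum_comm]
      have : ∀ i : Fin b, (∑ q ∈ univ.erase p, if p ∈ B i ∧ q ∈ B i then 1 else 0)
          = if p ∈ B i then k - 1 else 0 := by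
        intro i
        by_cases hp : p ∈ B i
        · simp only [hp, true_and, if_true]
          rw [← Finset.card_filter]
          have : (univ.erase p).filter (fun q => q ∈ B i) = (B i).erase p := by
            ext q; simp [Finset.mem_erase, and_comm]
          rw [this, Finset.card_erase_of_mem hp, hcard]
        · simp [hp]
      rw [Finset.sum_congr rfl (fun i _ => this i), ← Finset.sum_filter, Finset.sum_const,
        smul_eq_mul]
    have key2 : ∑ q ∈ univ.erase p, (univ.filter (fun i => p ∈ B i ∧ q ∈ B i)).card
        = lam * (v - 1) := by
      rw [Finset.sum_congr rfl (fun q hq => hpair p q (Ne.symm (Finset.ne_of_mem_erase hq))),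
        Finset.sum_const, smul_eq_mul, Finset.card_erase_of_mem (Finset.mem_univ p),
        Finset.card_univ, Fintype.card_fin, mul_comm]
    rw [← key, key2]
  -- r p > lam
  have hrgt : ∀ p, lam < r p := by
    intro p
    by_contra h
    push_neg at h
    have h1 : r p * (k - 1) < lam * (v - 1) := by
      calc r p * (k - 1) ≤ lam * (k - 1) := Nat.mul_le_mul_right _ h
        _ < lam * (v - 1) := by
          have h2 : k - 1 < v - 1 := by omega
          have h0 : 0 < lam := hlam
          exact mul_lt_mul_of_pos_left h2 h0
    exact (Nat.ne_of_lt h1) (hrk p)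
  -- incidence matrix
  set M : Matrix (Fin v) (Fin b) ℝ := Matrix.of fun p i => if p ∈ B i then 1 else 0 with hM
  set A : Matrix (Fin v) (Fin v) ℝ := M * Mᵀ with hAdef
  have hA : ∀ p q, A p q = if p = q then (r p : ℝ) else (lam : ℝ) := by
    intro p q
    have h1 : A p q = ((univ.filter fun i => p ∈ B i ∧ q ∈ B i).card : ℝ) := by
      rw [hAdef, Matrix.mul_apply, Finset.card_filter]
      push_cast
      apply Finset.sum_congr rfl
      intro i _
      by_cases h1 : p ∈ B i <;> by_cases h2 : q ∈ B i <;> simp [hM, h1, h2]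
    rw [h1]
    by_cases hpq : p = q
    · subst hpq
      simp only [if_pos rfl, hrdef]
      norm_cast
      congr 1
      apply Finset.filter_congr
      intro i _; simp
    · rw [if_neg hpq, hpair p q hpq]
  -- positive definiteness
  have hpos : A.PosDef := by
    rw [Matrix.posDef_iff_dotProduct_mulVec]
    constructor
    · rw [hAdef]
      have := Matrix.isHermitian_mul_conjTranspose_self M
      simpa using this
    · intro x hx
      have hstar : star x = x := by ext p; simp
      rw [hstar]
      have hnn : ∀ q : Fin v, (0:ℝ) ≤ (r q : ℝ) - lam := by
        intro q
        have : (lam : ℝ) ≤ (r q : ℝ) := by exact_mod_cast (hrgt q).le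
        linarith
      have hquad : x ⬝ᵥ (A *ᵥ x) =
          (lam : ℝ) * (∑ p, x p) ^ 2 + ∑ p, ((r p : ℝ) - lam) * x p ^ 2 := by
        have step : ∀ p : Fin v, (∑ q, x p * (A p q * x q)) =
            (∑ q, (lam : ℝ) * (x p * x q)) + ((r p : ℝ) - lam) * x p ^ 2 := by
          intro p
          have e : ∀ q : Fin v, x p * (A p q * x q)
              = (lam : ℝ) * (x p * x q) + (if q = p then ((r p : ℝ) - lam) * x p ^ 2 else 0) := by
            intro q
            rw [hA p q]
            by_cases hpq : p = q
            · subst hpq; rw [if_pos rfl, if_pos rfl]; ring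
            · rw [if_neg hpq, if_neg (Ne.symm hpq)]; ring
          rw [Finset.sum_congr rfl (fun q _ => e q), Finset.sum_add_distrib,
            Finset.sum_ite_eq' univ p (fun _ => ((r p : ℝ) - lam) * x p ^ 2),
            if_pos (Finset.mem_univ p)]
        simp only [dotProduct, Matrix.mulVec, dotProduct, Finset.mul_sum]
        rw [Finset.sum_congr rfl (fun p _ => step p), Finset.sum_add_distrib]
        congr 1
        rw [sq, Finset.sum_mul, Finset.mul_sum]
        apply Finset.sum_congr rfl
        intro p _
        rw [Finset.mul_sum, Finset.mul_sum]
      rw [hquad]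
      have h1 : 0 ≤ (lam : ℝ) * (∑ p, x p) ^ 2 :=
        mul_nonneg (by positivity) (sq_nonneg _)
      have h2 : 0 < ∑ p, ((r p : ℝ) - lam) * x p ^ 2 := by
        obtain ⟨p, hp⟩ := Function.ne_iff.mp hx
        simp only [Pi.zero_apply] at hp
        refine Finset.sum_pos' (fun q _ => mul_nonneg (hnn q) (sq_nonneg _))
          ⟨p, Finset.mem_univ p, mul_pos ?_ (by positivity)⟩
        have : (lam : ℝ) < (r p : ℝ) := by exact_mod_cast hrgt p
        linarith
      linarith
  -- rank argument
  have hrank : A.rank = v := by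
    rw [Matrix.rank_of_isUnit A hpos.isUnit, Fintype.card_fin]
  calc v = A.rank := hrank.symm
    _ ≤ M.rank := Matrix.rank_mul_le_left M Mᵀ
    _ ≤ b := by simpa using M.rank_le_card_width
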